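/- arXiv:2402.08131 — 2 statements merged into one kernel-verified Lean document; each statement's English description precedes it below -/
import Mathlib

section
/- Let G be a finite group and K = x^G such that K^n is a conjugacy class for some n ≥ 2. Then K^m is a conjugacy class for every m ∈ ℕ with gcd(m, o(x)) = 1. -/
open Pointwise

/-- The conjugacy class of `a` in `G`. -/
def conjClass (G : Type*) [Group G] (a : G) : Set G := {b | IsConj a b}

lemma isConj_orderOf_eq {G : Type*} [Group G] {a b : G} (h : IsConj a b) :
    orderOf a = orderOf b := by
  obtain ⟨c, hc⟩ := h
  exact SemiconjBy.orderOf_eq (↑c) hc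

lemma image_pow_conjClass {G : Type*} [Group G] (x : G) (j : ℕ) :
    (fun z => z ^ j) '' conjClass G x = conjClass G (x ^ j) := by
  ext y
  simp only [Set.mem_image, conjClass, Set.mem_setOf_eq, isConj_iff]
  constructor
  · rintro ⟨z, ⟨g, rfl⟩, rfl⟩
    exact ⟨g, (conj_pow ..).symm⟩
  · rintro ⟨g, rfl⟩
    exact ⟨g * x * g⁻¹, ⟨g, rfl⟩, conj_pow ..⟩

lemma conjClass_eq_of_isConj {G : Type*} [Group G] {a b : G} (h : IsConj a b) :
    conjClass G a = conjClass G b := by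
  ext y
  exact ⟨fun hy => h.symm.trans hy, fun hy => h.trans hy⟩

theorem stmt12 {G : Type*} [Group G] [Fintype G] (x : G) (n : ℕ) (hn : 2 ≤ n)
    (h : ∃ d : G, (conjClass G x) ^ n = conjClass G d) :
    ∀ m : ℕ, Nat.Coprime m (orderOf x) → ∃ e : G, (conjClass G x) ^ m = conjClass G e := by
  set K : Set G := conjClass G x with hK
  have hxK : x ∈ K := IsConj.refl x
  obtain ⟨d, hd⟩ := h
  -- K^n is the class of x^n
  have hxn : x ^ n ∈ K ^ n := Set.pow_mem_pow hxK
  have hKn : K ^ n = conjClass G (x ^ n) := by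
    rw [hd] at hxn ⊢
    exact conjClass_eq_of_isConj hxn
  -- |K^n| ≤ |K|
  have hcard_le : (K ^ n).ncard ≤ K.ncard := by
    rw [hKn, ← image_pow_conjClass x n]
    exact Set.ncard_image_le (Set.toFinite _)
  -- x^(n-1) • K ⊆ K^n, hence equality by cardinality
  have hsub : (x ^ (n - 1)) • K ⊆ K ^ n := by
    rintro _ ⟨z, hz, rfl⟩
    have : x ^ (n - 1) * z ∈ K ^ (n - 1) * K := Set.mul_mem_mul (Set.pow_mem_pow hxK) hz
    rwa [← pow_succ, Nat.sub_add_cancel (by omega)] at this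
  have heq1 : (x ^ (n - 1)) • K = K ^ n :=
    Set.eq_of_subset_of_ncard_le hsub
      (le_trans hcard_le (le_of_eq (Set.ncard_smul_set ..).symm)) (Set.toFinite _)
  have hcardKn : (K ^ n).ncard = K.ncard := by
    rw [← heq1, Set.ncard_smul_set]
  -- |K^2| ≤ |K^n| = |K|, and x • K ⊆ K^2, hence K^2 = x • K
  have hsub2 : (fun w => w * x ^ (n - 2)) '' (K ^ 2) ⊆ K ^ n := by
    rintro _ ⟨w, hw, rfl⟩
    have : w * x ^ (n - 2) ∈ K ^ 2 * K ^ (n - 2) := Set.mul_mem_mul hw (Set.pow_mem_pow hxK)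
    rwa [← pow_add, Nat.add_sub_cancel' hn] at this
  have hcardK2 : (K ^ 2).ncard ≤ K.ncard := by
    calc (K ^ 2).ncard = ((fun w => w * x ^ (n - 2)) '' (K ^ 2)).ncard :=
          (Set.ncard_image_of_injective _ (mul_left_injective _)).symm
      _ ≤ (K ^ n).ncard := Set.ncard_le_ncard hsub2 (Set.toFinite _)
      _ = K.ncard := hcardKn
  have hsubxK : x • K ⊆ K ^ 2 := by
    rintro _ ⟨z, hz, rfl⟩
    rw [sq]
    exact Set.mul_mem_mul hxK hz
  have hK2 : x • K = K ^ 2 :=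
    Set.eq_of_subset_of_ncard_le hsubxK
      (le_trans hcardK2 (le_of_eq (Set.ncard_smul_set ..).symm)) (Set.toFinite _)
  -- K^(m+1) = x^m • K for all m
  have hKm : ∀ m : ℕ, K ^ (m + 1) = (x ^ m) • K := by
    intro m
    induction m with
    | zero => simp
    | succ k ih =>
        rw [pow_succ, ih, smul_mul_assoc, ← sq, ← hK2, smul_smul, ← pow_succ]
  intro m hm
  rcases Nat.eq_zero_or_pos m with rfl | hm1
  · refine ⟨1, ?_⟩
    rw [pow_zero]
    ext y
    simp only [conjClass, Set.mem_setOf_eq, Set.mem_one]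
    constructor
    · rintro rfl; exact IsConj.refl 1
    · intro hy; exact isConj_one_right.mp hy
  -- main case : m ≥ 1
  refine ⟨x ^ m, ?_⟩
  -- a uniform inverse exponent for the m-th power map on elements of order o(x)
  have key : ∃ b : ℕ, ∀ z : G, orderOf z = orderOf x → (z ^ m) ^ b = z := by
    rcases Nat.lt_or_ge 1 (orderOf x) with hlt | hle
    · obtain ⟨b, -, hb⟩ := Nat.exists_mul_mod_eq_one_of_coprime hm hlt
      refine ⟨b, fun z hz => ?_⟩
      rw [← pow_mul, ← pow_mod_orderOf, hz, hb, pow_one]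
    · have h1 : orderOf x = 1 := by have := orderOf_pos x; omega
      refine ⟨1, fun z hz => ?_⟩
      have hz1 : z = 1 := orderOf_eq_one_iff.mp (hz.trans h1)
      simp [hz1]
  obtain ⟨b, hb⟩ := key
  have hinj : Set.InjOn (fun z => z ^ m) K := by
    intro z1 h1 z2 h2 he
    have ho1 : orderOf z1 = orderOf x := (isConj_orderOf_eq h1).symm
    have ho2 : orderOf z2 = orderOf x := (isConj_orderOf_eq h2).symm
    calc z1 = (z1 ^ m) ^ b := (hb z1 ho1).symm
      _ = (z2 ^ m) ^ b := by rw [show z1 ^ m = z2 ^ m from he]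
      _ = z2 := hb z2 ho2
  -- cardinality of K^m is |K|
  have hcardKm : (K ^ m).ncard = K.ncard := by
    obtain ⟨k, rfl⟩ : ∃ k, m = k + 1 := ⟨m - 1, by omega⟩
    rw [hKm k, Set.ncard_smul_set]
  -- the image of the power map is contained in K^m
  have himsub : (fun z => z ^ m) '' K ⊆ K ^ m := by
    rintro _ ⟨z, hz, rfl⟩
    exact Set.pow_mem_pow hz
  have him : (fun z => z ^ m) '' K = K ^ m := by
    apply Set.eq_of_subset_of_ncard_le himsub _ (Set.toFinite _)
    rw [Set.ncard_image_of_injOn hinj, hcardKm]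
  rw [← him, image_pow_conjClass]
end

section
/- Let G be a finite group and K = x^G with K^n = K for some n ≥ 2. Then K^{n−1} = [x,G] is a normal subgroup of G, and every prime dividing o(x) divides n−1. -/
open Pointwise

/-- The subgroup `[x,G]` generated by the commutators `[x,g] = x⁻¹ · x^g` for `g ∈ G`. -/
def commSub {G : Type*} [Group G] (x : G) : Subgroup G :=
  Subgroup.closure {z | ∃ g : G, z = x⁻¹ * (g⁻¹ * x * g)}

section Helpers

variable {G : Type*} [Group G] (x : G)

lemma mem_conjClass_iff {b : G} : b ∈ conjClass G x ↔ ∃ c : G, c * x * c⁻¹ = b := by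
  simp [conjClass, isConj_iff]

lemma self_mem_conjClass : x ∈ conjClass G x := IsConj.refl x

lemma gen_mem_commSub (g : G) : x⁻¹ * (g⁻¹ * x * g) ∈ commSub x :=
  Subgroup.subset_closure ⟨g, rfl⟩

lemma inv_mul_mem_commSub {k : G} (hk : k ∈ conjClass G x) : x⁻¹ * k ∈ commSub x := by
  obtain ⟨c, hc⟩ := (mem_conjClass_iff x).1 hk
  have h1 := gen_mem_commSub x c⁻¹
  have h2 : x⁻¹ * (c⁻¹⁻¹ * x * c⁻¹) = x⁻¹ * k := by rw [← hc]; group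
  rwa [h2] at h1

lemma commSub_normal : (commSub x).Normal := by
  constructor
  intro a ha g
  induction ha using Subgroup.closure_induction with
  | mem a ha =>
      obtain ⟨u, rfl⟩ := ha
      have h1 := mul_mem (inv_mem (gen_mem_commSub x g⁻¹)) (gen_mem_commSub x (u * g⁻¹))
      have h2 : (x⁻¹ * (g⁻¹⁻¹ * x * g⁻¹))⁻¹ * (x⁻¹ * ((u * g⁻¹)⁻¹ * x * (u * g⁻¹)))
          = g * (x⁻¹ * (u⁻¹ * x * u)) * g⁻¹ := by group
      rwa [h2] at h1
  | one => simpa using one_mem (commSub x)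
  | mul a b _ _ hia hib =>
      have h2 : (g * a * g⁻¹) * (g * b * g⁻¹) = g * (a * b) * g⁻¹ := by group
      rw [← h2]; exact mul_mem hia hib
  | inv a _ hia =>
      have h2 : (g * a * g⁻¹)⁻¹ = g * a⁻¹ * g⁻¹ := by group
      rw [← h2]; exact inv_mem hia

/-- elements of `K ^ (j+1)` lie in the coset `x^(j+1) • commSub x`. -/
lemma pow_subset_coset :
    ∀ (j : ℕ) {k : G}, k ∈ (conjClass G x) ^ (j + 1) → (x ^ (j + 1))⁻¹ * k ∈ commSub x := by
  intro j
  induction j with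
  | zero =>
      intro k hk
      rw [pow_one] at hk
      simpa using inv_mul_mem_commSub x hk
  | succ j ih =>
      intro k hk
      rw [pow_succ] at hk
      obtain ⟨a, ha, b, hb, rfl⟩ := Set.mem_mul.1 hk
      have h1 : x⁻¹ * ((x ^ (j + 1))⁻¹ * a) * x ∈ commSub x := by
        have := (commSub_normal x).conj_mem _ (ih ha) x⁻¹
        simpa using this
      have h2 := mul_mem h1 (inv_mul_mem_commSub x hb)
      have h3 : x⁻¹ * ((x ^ (j + 1))⁻¹ * a) * x * (x⁻¹ * b)
          = (x ^ (j + 1 + 1))⁻¹ * (a * b) := by group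
      rwa [h3] at h2

lemma mul_closed_pow {S : Set G} (hmul : ∀ a ∈ S, ∀ b ∈ S, a * b ∈ S) {a : G} (ha : a ∈ S) :
    ∀ j : ℕ, a ^ (j + 1) ∈ S := by
  intro j
  induction j with
  | zero => simpa using ha
  | succ j ih => rw [pow_succ]; exact hmul _ ih _ ha

end Helpers

theorem stmt13 {G : Type*} [Group G] [Fintype G] (x : G) (n : ℕ) (hn : 2 ≤ n)
    (h : (conjClass G x) ^ n = conjClass G x) :
    (conjClass G x) ^ (n - 1) = (commSub x : Set G) ∧ (commSub x).Normal ∧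
      ∀ p : ℕ, p.Prime → p ∣ orderOf x → p ∣ (n - 1) := by
  set K := conjClass G x with hKdef
  obtain ⟨m', rfl⟩ : ∃ m', n = m' + 2 := ⟨n - 2, by omega⟩
  set m : ℕ := m' + 1 with hmdef
  have hnm : m' + 2 - 1 = m := rfl
  rw [hnm]
  have hxK : x ∈ K := self_mem_conjClass x
  -- x ^ m ∈ commSub x
  have hxm : x ^ m ∈ commSub x := by
    have h1 : x ^ (m' + 2) ∈ K := by rw [← h]; exact Set.pow_mem_pow hxK
    have h2 := inv_mul_mem_commSub x h1
    have h3 : x⁻¹ * x ^ (m' + 2) = x ^ m := by rw [hmdef]; group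
    rwa [h3] at h2
  -- K ^ m ⊆ commSub x
  have hE : ∀ k ∈ K ^ m, k ∈ commSub x := by
    intro k hk
    have h1 := pow_subset_coset x m' hk
    have h2 := mul_mem hxm h1
    rwa [mul_inv_cancel_left] at h2
  -- K ^ m is closed under multiplication
  have hSS : K ^ m * K ^ m = K ^ m := by
    rw [← pow_add]
    have h2 : m + m = m' + (m' + 2) := by omega
    rw [h2, pow_add, h, ← pow_succ]
  have hmul : ∀ a ∈ K ^ m, ∀ b ∈ K ^ m, a * b ∈ K ^ m := by
    intro a ha b hb
    rw [← hSS]; exact Set.mul_mem_mul ha hb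
  -- K ^ m is closed under inverses and contains 1
  have hinv : ∀ a ∈ K ^ m, a⁻¹ ∈ K ^ m := by
    intro a ha
    obtain ⟨j, hj⟩ : ∃ j, orderOf a = j + 1 :=
      ⟨orderOf a - 1, by have := orderOf_pos a; omega⟩
    have h1 : a ^ (j + 1) = 1 := by rw [← hj]; exact pow_orderOf_eq_one a
    rcases Nat.eq_zero_or_pos j with hj0 | hj0
    · subst hj0
      have : a = 1 := by simpa using h1
      simpa [this] using ha
    · obtain ⟨i, rfl⟩ : ∃ i, j = i + 1 := ⟨j - 1, by omega⟩
      have h2 : a ^ (i + 1) ∈ K ^ m := mul_closed_pow hmul ha i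
      have h3 : a⁻¹ = a ^ (i + 1) := by
        have : a ^ (i + 1) * a = 1 := by rw [← pow_succ]; exact h1
        exact (eq_inv_of_mul_eq_one_left this).symm
      rwa [h3]
  have hone : (1 : G) ∈ K ^ m := by
    have h1 : x ^ m ∈ K ^ m := Set.pow_mem_pow hxK
    have h2 := mul_closed_pow hmul h1 (orderOf (x ^ m) - 1)
    have h3 : orderOf (x ^ m) - 1 + 1 = orderOf (x ^ m) := by
      have := orderOf_pos (x ^ m); omega
    rw [h3, pow_orderOf_eq_one] at h2
    exact h2
  -- commSub x ⊆ K ^ m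
  have hF : ∀ a ∈ commSub x, a ∈ K ^ m := by
    intro a ha
    induction ha using Subgroup.closure_induction with
    | mem a ha =>
        obtain ⟨g, rfl⟩ := ha
        have h1 : x ^ m' * (g⁻¹ * x * g) ∈ K ^ m := by
          rw [hmdef, pow_succ]
          exact Set.mul_mem_mul (Set.pow_mem_pow hxK) ((mem_conjClass_iff x).2 ⟨g⁻¹, by group⟩)
        have h2 : (x ^ m)⁻¹ ∈ K ^ m := hinv _ (Set.pow_mem_pow hxK)
        have h3 := hmul _ h2 _ h1
        have h4 : (x ^ m)⁻¹ * (x ^ m' * (g⁻¹ * x * g)) = x⁻¹ * (g⁻¹ * x * g) := by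
          rw [hmdef]; group
        rwa [h4] at h3
    | one => exact hone
    | mul a b _ _ hia hib => exact hmul _ hia _ hib
    | inv a _ hia => exact hinv _ hia
  have hEq : K ^ m = (commSub x : Set G) := Set.Subset.antisymm hE hF
  refine ⟨hEq, commSub_normal x, ?_⟩
  -- primes
  intro p hp hpo
  by_contra hpm
  haveI : Fact p.Prime := ⟨hp⟩
  -- find k with p ∣ m * k + 1
  set u : ZMod p := (-1) * (m : ZMod p)⁻¹ with hu
  have hm0 : (m : ZMod p) ≠ 0 := by
    rw [Ne, ZMod.natCast_eq_zero_iff]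
    exact hpm
  set k : ℕ := u.val with hk
  have hdvd : p ∣ m * k + 1 := by
    rw [← ZMod.natCast_eq_zero_iff]
    push_cast
    rw [ZMod.natCast_rightInverse u, hu]
    field_simp
    push_cast [hmdef]
    ring
  -- x ^ (m * k + 1) is conjugate to x
  have hc1 : x ^ (m * k) ∈ commSub x := by
    have h1 := mul_closed_pow hmul (Set.pow_mem_pow hxK (n := m)) (k - 1)
    rcases Nat.eq_zero_or_pos k with hk0 | hk0
    · rw [hk0, mul_zero, pow_zero]; exact one_mem _
    · have h2 : k - 1 + 1 = k := by omega
      rw [h2, ← pow_mul] at h1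
      exact hE _ h1
  have hc2 : x ^ (m * k + 1) ∈ K := by
    have h1 : x * x ^ (m * k) ∈ K * K ^ m := Set.mul_mem_mul hxK (hF _ hc1)
    have h2 : K * K ^ m = K ^ (m' + 2) := by rw [hmdef, ← pow_succ', pow_succ']
    rw [h2, h] at h1
    have h3 : x * x ^ (m * k) = x ^ (m * k + 1) := by group
    rwa [h3] at h1
  obtain ⟨c, hc⟩ := (mem_conjClass_iff x).1 hc2
  have horder : orderOf x = orderOf (x ^ (m * k + 1)) := by
    refine SemiconjBy.orderOf_eq c ?_
    rw [SemiconjBy, ← hc]; group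
  -- derive contradiction
  obtain ⟨a, hA⟩ := hdvd
  obtain ⟨b, hB⟩ := hpo
  have hb1 : 1 ≤ b := by
    rcases Nat.eq_zero_or_pos b with h0 | h0
    · exfalso; subst h0; rw [mul_zero] at hB; have := orderOf_pos x; omega
    · exact h0
  have hpow : (x ^ (m * k + 1)) ^ b = 1 := by
    rw [← pow_mul, hA]
    have : p * a * b = orderOf x * a := by rw [hB]; ring
    rw [this, pow_mul, pow_orderOf_eq_one, one_pow]
  have hdvd2 : orderOf x ∣ b := horder ▸ orderOf_dvd_of_pow_eq_one hpow
  have hle := Nat.le_of_dvd hb1 hdvd2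
  rw [hB] at hle
  have h2 : p * b ≤ 1 * b := by simpa using hle
  have h3 : p ≤ 1 := Nat.le_of_mul_le_mul_right h2 hb1
  have hp2 := hp.two_le
  omega
end
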